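/- Let f ∈ G_s(Z). Then for every (x,x*) ∈ X × X* with (x,x*) ∉ M_f there exists a bounded sequence ((x_n, x_n*))_{n ≥ 1} ⊆ M_f such that x_n ≠ x and x_n* ≠ x* for every n, and ⟨x_n − x, x_n* − x*⟩ / ( ‖x_n − x‖ · ‖x_n* − x*‖ ) → −1 as n → ∞. (In particular, every strongly representable operator is of type ANA.) -/

import Mathlib

open NormedSpace Filter

noncomputable section

/-- The coupling `c(x, x*) := ⟨x, x*⟩` on `Z := X × X*`. -/
def coup (X : Type*) [NormedAddCommGroup X] [NormedSpace ℝ X]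
    (z : X × StrongDual ℝ X) : ℝ := z.2 z.1

/-- The coupling `c(u*, u**) := ⟨u*, u**⟩` on `Z* := X* × X**`. -/
def coupS (X : Type*) [NormedAddCommGroup X] [NormedSpace ℝ X]
    (p : StrongDual ℝ X × StrongDual ℝ (StrongDual ℝ X)) : ℝ := p.2 p.1

/-- The Fenchel conjugate `f* : X* × X** → ℝ ∪ {±∞}` of `f : Z → ℝ ∪ {+∞}`. -/
def conjF (X : Type*) [NormedAddCommGroup X] [NormedSpace ℝ X]
    (f : X × StrongDual ℝ X → EReal) (p : StrongDual ℝ X × StrongDual ℝ (StrongDual ℝ X)) : EReal :=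
  ⨆ z : X × StrongDual ℝ X, (((p.1 z.1 + p.2 z.2 : ℝ) : EReal) - f z)

/-- `M_f := {z | f z = c z}`. -/
def Mset (X : Type*) [NormedAddCommGroup X] [NormedSpace ℝ X]
    (f : X × StrongDual ℝ X → EReal) : Set (X × StrongDual ℝ X) :=
  {z | f z = ((coup X z : ℝ) : EReal)}

/-- The `ℓ²`-norm `‖(a, b)‖ := (‖a‖² + ‖b‖²)^{1/2}` on a product. -/
def nrm2 {A B : Type*} [NormedAddCommGroup A] [NormedAddCommGroup B] (p : A × B) : ℝ :=
  Real.sqrt (‖p.1‖ ^ 2 + ‖p.2‖ ^ 2)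

/-- quadratic -/
def qq {X : Type*} [NormedAddCommGroup X] [NormedSpace ℝ X] (w : X × StrongDual ℝ X) : ℝ :=
  ‖w.1‖^2/2 + ‖w.2‖^2/2

def aff {X : Type*} [NormedAddCommGroup X] [NormedSpace ℝ X] (z' w : X × StrongDual ℝ X) : ℝ :=
  z'.2 w.1 + w.2 z'.1 + z'.2 z'.1

def Hh {X : Type*} [NormedAddCommGroup X] [NormedSpace ℝ X]
    (f : X × StrongDual ℝ X → EReal) (z' w : X × StrongDual ℝ X) : EReal :=
  f (z' + w) - ((aff z' w : ℝ) : EReal)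

section ER
-- EReal helpers
lemma er_sub_le_iff (a : EReal) (x y : ℝ) : a - (x:EReal) ≤ (y:EReal) ↔ a ≤ ((y + x : ℝ):EReal) := by
  induction a using EReal.rec
  · simp
  · rw [← EReal.coe_sub]; norm_cast; constructor <;> intro h <;> linarith
  · rw [EReal.top_sub_coe]
    simp only [top_le_iff]
    constructor <;> intro h <;> [exact absurd h (EReal.coe_ne_top _);
      exact absurd h (EReal.coe_ne_top _)]
lemma er_le_sub_iff (a : EReal) (x y : ℝ) : (x:EReal) ≤ a - (y:EReal) ↔ ((x + y : ℝ):EReal) ≤ a := by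
  induction a using EReal.rec
  · simp [EReal.bot_sub]
  · rw [← EReal.coe_sub]; norm_cast; constructor <;> intro h <;> linarith
  · rw [EReal.top_sub_coe]; constructor <;> intro _ <;> exact le_top
lemma er_sub_lt_iff (a : EReal) (x y : ℝ) : a - (x:EReal) < (y:EReal) ↔ a < ((y + x : ℝ):EReal) := by
  induction a using EReal.rec
  · simp [EReal.bot_sub]
  · rw [← EReal.coe_sub]; norm_cast; constructor <;> intro h <;> linarith
  · rw [EReal.top_sub_coe]; simp
lemma er_lt_sub_iff (a : EReal) (x y : ℝ) : (x:EReal) < a - (y:EReal) ↔ ((x + y : ℝ):EReal) < a := by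
  induction a using EReal.rec
  · simp [EReal.bot_sub]
  · rw [← EReal.coe_sub]; norm_cast; constructor <;> intro h <;> linarith
  · simp [EReal.top_sub_coe]; exact EReal.coe_lt_top _
lemma er_sub_ne_bot {a : EReal} (h : a ≠ ⊥) (x : ℝ) : a - (x:EReal) ≠ ⊥ := by
  induction a using EReal.rec
  · exact absurd rfl h
  · rw [← EReal.coe_sub]; exact EReal.coe_ne_bot _
  · rw [EReal.top_sub_coe]; simp
lemma er_sub_ne_top {a : EReal} (h : a ≠ ⊤) (x : ℝ) : a - (x:EReal) ≠ ⊤ := by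
  induction a using EReal.rec
  · simp [EReal.bot_sub]
  · rw [← EReal.coe_sub]; exact EReal.coe_ne_top _
  · exact absurd rfl h
lemma er_coe_sub_lt {a : EReal} {s : ℝ} (h : (s:EReal) < a) (x : ℝ) :
    ((s - x : ℝ):EReal) < a - (x:EReal) := by
  rw [er_lt_sub_iff]; simpa using h
lemma er_sub_le_coe_of_coe_le {a : EReal} {x : ℝ} (h : (x:EReal) ≤ a) (y : ℝ) :
    (y:EReal) - a ≤ ((y - x : ℝ):EReal) := by
  induction a using EReal.rec
  · simp at h
  · rename_i a; have : (y:EReal) - (a:EReal) = ((y - a : ℝ):EReal) := (EReal.coe_sub _ _).symm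
    rw [this]; norm_cast at h ⊢; linarith
  · simp
end ER

section Aux
variable {X : Type*} [NormedAddCommGroup X] [NormedSpace ℝ X]

lemma dual_inf {E : Type*} [NormedAddCommGroup E] [NormedSpace ℝ E] (φ : StrongDual ℝ E) {ε : ℝ}
    (hε : 0 < ε) : ∃ v : E, φ v + ‖v‖^2/2 < -(‖φ‖^2/2) + ε := by
  rcases eq_or_lt_of_le (norm_nonneg φ) with h0 | h0
  · refine ⟨0, ?_⟩
    simp [← h0]
    positivity
  · set δ : ℝ := ε / (‖φ‖ + 1) with hδ
    have hδpos : 0 < δ := by positivity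
    have hr : ‖φ‖ - δ < ‖φ‖ := by linarith
    obtain ⟨x, hx1, hx2⟩ := φ.exists_lt_apply_of_lt_opNorm hr
    rw [Real.norm_eq_abs] at hx2
    rcases le_or_gt 0 (φ x) with hsign | hsign
    · refine ⟨-‖φ‖ • x, ?_⟩
      rw [abs_of_nonneg hsign] at hx2
      have h1 : φ (-‖φ‖ • x) = -‖φ‖ * φ x := by rw [map_smul]; simp
      have h2 : ‖(-‖φ‖ • x)‖ ≤ ‖φ‖ := by
        rw [norm_smul, Real.norm_eq_abs, abs_neg, abs_of_nonneg (norm_nonneg φ)]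
        nlinarith [norm_nonneg φ]
      have hbd : ‖φ‖ * δ < ε := by
        rw [hδ, mul_div_assoc', div_lt_iff₀ (by linarith : (0:ℝ) < ‖φ‖ + 1)]
        nlinarith
      have h3 : ‖(-‖φ‖ • x)‖^2/2 ≤ ‖φ‖^2/2 := by nlinarith [norm_nonneg (-‖φ‖ • x)]
      have h4 : -‖φ‖ * φ x ≤ -‖φ‖ * (‖φ‖ - δ) := by nlinarith
      rw [h1]; nlinarith
    · refine ⟨‖φ‖ • x, ?_⟩
      rw [abs_of_neg hsign] at hx2
      have h1 : φ (‖φ‖ • x) = ‖φ‖ * φ x := by rw [map_smul]; simp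
      have h2 : ‖(‖φ‖ • x)‖ ≤ ‖φ‖ := by
        rw [norm_smul, Real.norm_eq_abs, abs_of_nonneg (norm_nonneg φ)]
        nlinarith [norm_nonneg φ]
      have hbd : ‖φ‖ * δ < ε := by
        rw [hδ, mul_div_assoc', div_lt_iff₀ (by linarith : (0:ℝ) < ‖φ‖ + 1)]
        nlinarith
      have h3 : ‖(‖φ‖ • x)‖^2/2 ≤ ‖φ‖^2/2 := by nlinarith [norm_nonneg (‖φ‖ • x)]
      have h4 : ‖φ‖ * φ x ≤ -‖φ‖ * (‖φ‖ - δ) := by nlinarith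
      rw [h1]; nlinarith

lemma sq_cvx {a b x y z : ℝ} (ha : 0 ≤ a) (hb : 0 ≤ b) (hab : a + b = 1) (hz : 0 ≤ z)
    (h : z ≤ a * x + b * y) (hx : 0 ≤ x) (hy : 0 ≤ y) : z ^ 2 ≤ a * x ^ 2 + b * y ^ 2 := by
  nlinarith [mul_nonneg ha hb, sq_nonneg (x - y), mul_nonneg (mul_nonneg ha hb) (sq_nonneg (x-y))]

set_option maxHeartbeats 1000000 in
lemma core (f' : X × StrongDual ℝ X → EReal)
    (hprop : ∃ w, f' w ≠ ⊤) (hnb : ∀ w, f' w ≠ ⊥)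
    (hcv : Convex ℝ {p : (X × StrongDual ℝ X) × ℝ | f' p.1 ≤ (p.2 : EReal)})
    (β : ℝ) (hβ : ∀ w, (β : EReal) < f' w + ((qq w : ℝ) : EReal)) :
    ∃ (u1 : StrongDual ℝ X) (u2 : StrongDual ℝ (StrongDual ℝ X)) (r : ℝ),
      (∀ w : X × StrongDual ℝ X, ((u1 w.1 + u2 w.2 - r : ℝ) : EReal) ≤ f' w) ∧
      r + (‖u1‖^2/2 + ‖u2‖^2/2) ≤ -β := by
  classical
  set B : Set ((X × StrongDual ℝ X) × ℝ) := {p | p.2 + qq p.1 < β} with hBdef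
  have hBopen : IsOpen B := by
    have hc : Continuous fun p : (X × StrongDual ℝ X) × ℝ => p.2 + qq p.1 := by
      unfold qq; fun_prop
    exact isOpen_lt hc continuous_const
  have hBconv : Convex ℝ B := by
    intro p hp q hq a b ha hb hab
    simp only [hBdef, Set.mem_setOf_eq] at hp hq ⊢
    have c11 : (a • p + b • q).1.1 = a • p.1.1 + b • q.1.1 := rfl
    have c12 : (a • p + b • q).1.2 = a • p.1.2 + b • q.1.2 := rfl
    have c2 : (a • p + b • q).2 = a * p.2 + b * q.2 := rfl
    have n1 : ‖(a • p + b • q).1.1‖ ≤ a * ‖p.1.1‖ + b * ‖q.1.1‖ := by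
      rw [c11]
      refine (norm_add_le _ _).trans ?_
      rw [norm_smul, norm_smul, Real.norm_eq_abs, Real.norm_eq_abs, abs_of_nonneg ha,
        abs_of_nonneg hb]
    have n2 : ‖(a • p + b • q).1.2‖ ≤ a * ‖p.1.2‖ + b * ‖q.1.2‖ := by
      rw [c12]
      refine (norm_add_le _ _).trans ?_
      rw [norm_smul, norm_smul, Real.norm_eq_abs, Real.norm_eq_abs, abs_of_nonneg ha,
        abs_of_nonneg hb]
    have sq1 : ‖(a • p + b • q).1.1‖ ^ 2 ≤ a * ‖p.1.1‖ ^ 2 + b * ‖q.1.1‖ ^ 2 :=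
      sq_cvx ha hb hab (norm_nonneg _) n1 (norm_nonneg _) (norm_nonneg _)
    have sq2 : ‖(a • p + b • q).1.2‖ ^ 2 ≤ a * ‖p.1.2‖ ^ 2 + b * ‖q.1.2‖ ^ 2 :=
      sq_cvx ha hb hab (norm_nonneg _) n2 (norm_nonneg _) (norm_nonneg _)
    unfold qq at hp hq ⊢
    rw [c2]
    have hcomb := (convex_Iio β) hp hq ha hb hab
    simp only [smul_eq_mul, Set.mem_Iio] at hcomb
    linarith [sq1, sq2, hcomb]
  have hdisj : Disjoint B {p : (X × StrongDual ℝ X) × ℝ | f' p.1 ≤ (p.2 : EReal)} := by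
    rw [Set.disjoint_left]
    rintro p hpB hpA
    simp only [hBdef, Set.mem_setOf_eq] at hpB hpA
    have h1 : f' p.1 + ((qq p.1 : ℝ) : EReal) ≤ ((p.2 + qq p.1 : ℝ) : EReal) := by
      rw [EReal.coe_add]; exact add_le_add_left hpA _
    have h2 : (β : EReal) < ((p.2 + qq p.1 : ℝ) : EReal) := lt_of_lt_of_le (hβ p.1) h1
    rw [EReal.coe_lt_coe_iff] at h2
    linarith
  obtain ⟨L, u, hBu, hAu⟩ := geometric_hahn_banach_open hBconv hBopen hcv hdisj
  set e1 : X →L[ℝ] (X × StrongDual ℝ X) × ℝ :=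
    (ContinuousLinearMap.inl ℝ (X × StrongDual ℝ X) ℝ).comp (ContinuousLinearMap.inl ℝ X (StrongDual ℝ X))
  set e2 : StrongDual ℝ X →L[ℝ] (X × StrongDual ℝ X) × ℝ :=
    (ContinuousLinearMap.inl ℝ (X × StrongDual ℝ X) ℝ).comp (ContinuousLinearMap.inr ℝ X (StrongDual ℝ X))
  set u1' : StrongDual ℝ X := L.comp e1 with hu1'
  set u2' : StrongDual ℝ (StrongDual ℝ X) := L.comp e2 with hu2'
  set s : ℝ := L (((0 : X), (0 : StrongDual ℝ X)), (1 : ℝ)) with hs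
  have hLdec : ∀ (w : X × StrongDual ℝ X) (t : ℝ), L (w, t) = u1' w.1 + u2' w.2 + t * s := by
    intro w t
    have hsplit : (w, t) = (((w.1, 0), 0) : (X × StrongDual ℝ X) × ℝ) + ((0, w.2), 0)
        + (t • ((((0 : X), (0 : StrongDual ℝ X)), (1 : ℝ)))) := by
      refine Prod.ext ?_ ?_
      · refine Prod.ext ?_ ?_ <;> simp
      · simp
    rw [hsplit, map_add, map_add, map_smul]
    simp only [hu1', hu2', hs, ContinuousLinearMap.comp_apply, smul_eq_mul]
    rfl
  have hB' : ∀ (w : X × StrongDual ℝ X) (t : ℝ), t + qq w < β → u1' w.1 + u2' w.2 + t * s < u := by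
    intro w t h
    have := hBu (w, t) h
    rwa [hLdec] at this
  have hA' : ∀ (w : X × StrongDual ℝ X) (t : ℝ), f' w ≤ (t : EReal) →
      u ≤ u1' w.1 + u2' w.2 + t * s := by
    intro w t h
    have := hAu (w, t) h
    rwa [hLdec] at this
  obtain ⟨w₀, hw₀⟩ := hprop
  have hw0eq : f' w₀ = (((f' w₀).toReal : ℝ) : EReal) := (EReal.coe_toReal hw₀ (hnb w₀)).symm
  have hqq0 : qq (0 : X × StrongDual ℝ X) = 0 := by simp [qq]
  have hz1 : u1' (0 : X × StrongDual ℝ X).1 = 0 := by rw [Prod.fst_zero]; exact map_zero _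
  have hz2 : u2' (0 : X × StrongDual ℝ X).2 = 0 := by rw [Prod.snd_zero]; exact map_zero _
  have hs0 : 0 ≤ s := by
    by_contra hneg
    push_neg at hneg
    set t := min (β - 1) (u / s - 1) with htdef
    have h1 : t + qq (0 : X × StrongDual ℝ X) < β := by
      rw [hqq0]
      have := min_le_left (β - 1) (u / s - 1)
      linarith
    have h2 := hB' 0 t h1
    rw [hz1, hz2] at h2
    have h3 : t ≤ u / s - 1 := min_le_right _ _
    have h4 : (u / s - 1) * s ≤ t * s := mul_le_mul_of_nonpos_right h3 (le_of_lt hneg)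
    have h5 : (u / s - 1) * s = u - s := by
      rw [sub_mul, div_mul_cancel₀ _ (ne_of_lt hneg), one_mul]
    linarith
  have hsne : s ≠ 0 := by
    intro h0
    have hall : ∀ w : X × StrongDual ℝ X, u1' w.1 + u2' w.2 < u := by
      intro w
      have := hB' w (β - qq w - 1) (by linarith)
      rw [h0] at this
      simpa using this
    have h1 := hA' w₀ ((f' w₀).toReal) (le_of_eq hw0eq)
    rw [h0] at h1
    simp only [mul_zero, add_zero] at h1
    exact absurd (hall w₀) (not_lt.2 h1)
  have hspos : 0 < s := lt_of_le_of_ne hs0 (Ne.symm hsne)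
  refine ⟨(-(s⁻¹)) • u1', (-(s⁻¹)) • u2', -(u / s), ?_, ?_⟩
  · intro w
    rcases eq_or_ne (f' w) ⊤ with ht | ht
    · rw [ht]; exact le_top
    · have hreq : f' w = (((f' w).toReal : ℝ) : EReal) := (EReal.coe_toReal ht (hnb w)).symm
      set ρ := (f' w).toReal with hρ
      have hA2 := hA' w ρ (le_of_eq hreq)
      rw [hreq, EReal.coe_le_coe_iff]
      have e1' : ((-(s⁻¹)) • u1') w.1 = -(s⁻¹) * u1' w.1 := by
        rw [ContinuousLinearMap.smul_apply, smul_eq_mul]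
      have e2' : ((-(s⁻¹)) • u2') w.2 = -(s⁻¹) * u2' w.2 := by
        rw [ContinuousLinearMap.smul_apply, smul_eq_mul]
      rw [e1', e2']
      have key : u - u1' w.1 - u2' w.2 ≤ ρ * s := by linarith
      have : (u - u1' w.1 - u2' w.2) / s ≤ ρ := by
        rw [div_le_iff₀ hspos]; linarith
      have expand : -(s⁻¹) * u1' w.1 + -(s⁻¹) * u2' w.2 - -(u / s)
          = (u - u1' w.1 - u2' w.2) / s := by field_simp; ring
      linarith [expand ▸ this]
  · have hii : ∀ w : X × StrongDual ℝ X,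
        -(u / s) ≤ (((-(s⁻¹)) • u1') w.1 + ((-(s⁻¹)) • u2') w.2) + qq w - β := by
      intro w
      have hlim : u1' w.1 + u2' w.2 + (β - qq w) * s ≤ u := by
        by_contra hgt
        push_neg at hgt
        set P := u1' w.1 + u2' w.2 with hP
        set ν := (P + (β - qq w) * s - u) / s with hν
        have hνpos : 0 < ν := div_pos (by linarith) hspos
        have ht : (β - qq w - ν) + qq w < β := by linarith
        have hB2 := hB' w (β - qq w - ν) ht
        have hνs : ν * s = P + (β - qq w) * s - u := by
          rw [hν]; field_simp
        nlinarith [hB2]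
      have e1' : ((-(s⁻¹)) • u1') w.1 = -(s⁻¹) * u1' w.1 := by
        rw [ContinuousLinearMap.smul_apply, smul_eq_mul]
      have e2' : ((-(s⁻¹)) • u2') w.2 = -(s⁻¹) * u2' w.2 := by
        rw [ContinuousLinearMap.smul_apply, smul_eq_mul]
      rw [e1', e2']
      have hdiv : (u1' w.1 + u2' w.2) / s + (β - qq w) ≤ u / s := by
        rw [div_add' _ _ _ hsne, div_le_div_iff_of_pos_right hspos]
        linarith
      have expand : -(s⁻¹) * u1' w.1 + -(s⁻¹) * u2' w.2 = -((u1' w.1 + u2' w.2) / s) := by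
        field_simp
        ring
      rw [expand]
      linarith
    by_contra hcon
    push_neg at hcon
    set Q := ‖(-(s⁻¹)) • u1'‖^2/2 + ‖(-(s⁻¹)) • u2'‖^2/2 with hQ
    set ε := (-(u / s) + Q - (-β)) / 2 with hε
    have hεpos : 0 < ε := by
      rw [hε]
      have : -β < -(u/s) + Q := hcon
      linarith
    obtain ⟨v1, hv1⟩ := dual_inf ((-(s⁻¹)) • u1') (half_pos hεpos)
    obtain ⟨v2, hv2⟩ := dual_inf ((-(s⁻¹)) • u2') (half_pos hεpos)
    have h3 := hii (v1, v2)
    have hqqv : qq ((v1, v2) : X × StrongDual ℝ X) = ‖v1‖^2/2 + ‖v2‖^2/2 := rfl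
    rw [hqqv] at h3
    simp only at h3
    linarith [hv1, hv2, h3]

end Aux


section Trans
variable {X : Type*} [NormedAddCommGroup X] [NormedSpace ℝ X]
variable {f : X × StrongDual ℝ X → EReal} (z' : X × StrongDual ℝ X)

lemma aff_c (w : X × StrongDual ℝ X) : coup X (z' + w) = coup X w + aff z' w := by
  simp only [coup, aff, Prod.fst_add, Prod.snd_add, ContinuousLinearMap.add_apply, map_add]
  ring

lemma aff_zero : aff z' 0 = coup X z' := by
  simp [aff, coup]

lemma aff_lin {a b : ℝ} (hab : a + b = 1) (w w' : X × StrongDual ℝ X) :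
    aff z' (a • w + b • w') = a * aff z' w + b * aff z' w' := by
  simp only [aff, Prod.fst_add, Prod.snd_add, Prod.smul_fst, Prod.smul_snd,
    ContinuousLinearMap.add_apply, ContinuousLinearMap.smul_apply, map_add, map_smul,
    smul_eq_mul]
  linear_combination (-(z'.2 z'.1)) * hab

lemma gap_iff (w : X × StrongDual ℝ X) (δ : ℝ) :
    f (z' + w) ≤ ((coup X (z' + w) + δ : ℝ) : EReal) ↔
      Hh f z' w ≤ ((coup X w + δ : ℝ) : EReal) := by
  rw [Hh, er_sub_le_iff, aff_c]
  constructor <;> intro h <;> [skip; skip] <;>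
    · refine le_trans h (le_of_eq ?_)
      norm_cast
      ring

lemma trans_prop (hproper : ∃ v, f v ≠ ⊤) : ∃ w, Hh f z' w ≠ ⊤ := by
  obtain ⟨v, hv⟩ := hproper
  exact ⟨v - z', by rw [Hh, add_sub_cancel]; exact er_sub_ne_top hv _⟩

lemma trans_nb (hne_bot : ∀ v, f v ≠ ⊥) : ∀ w, Hh f z' w ≠ ⊥ := fun w =>
  er_sub_ne_bot (hne_bot _) _

lemma trans_ge (hge : ∀ v, ((coup X v : ℝ) : EReal) ≤ f v) :
    ∀ w, ((coup X w : ℝ) : EReal) ≤ Hh f z' w := by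
  intro w
  rw [Hh, er_le_sub_iff, ← aff_c]
  exact hge _

lemma trans_conv (hconv : Convex ℝ {p : (X × StrongDual ℝ X) × ℝ | f p.1 ≤ (p.2 : EReal)}) :
    Convex ℝ {p : (X × StrongDual ℝ X) × ℝ | Hh f z' p.1 ≤ (p.2 : EReal)} := by
  intro p hp q hq a b ha hb hab
  simp only [Set.mem_setOf_eq, Hh, er_sub_le_iff] at hp hq ⊢
  have hP : ((z' + p.1, p.2 + aff z' p.1) : (X × StrongDual ℝ X) × ℝ)
      ∈ {p : (X × StrongDual ℝ X) × ℝ | f p.1 ≤ (p.2 : EReal)} := hp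
  have hQ : ((z' + q.1, q.2 + aff z' q.1) : (X × StrongDual ℝ X) × ℝ)
      ∈ {p : (X × StrongDual ℝ X) × ℝ | f p.1 ≤ (p.2 : EReal)} := hq
  have hC := hconv hP hQ ha hb hab
  simp only [Set.mem_setOf_eq, Prod.fst_add, Prod.snd_add, Prod.smul_fst, Prod.smul_snd,
    smul_eq_mul] at hC
  have hpt : a • (z' + p.1) + b • (z' + q.1) = z' + (a • p + b • q).1 := by
    have h1 : (a • p + b • q).1 = a • p.1 + b • q.1 := rfl
    have h2 : a • z' + b • z' = z' := by rw [← add_smul, hab, one_smul]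
    rw [h1, smul_add, smul_add]
    calc a • z' + a • p.1 + (b • z' + b • q.1)
        = (a • z' + b • z') + (a • p.1 + b • q.1) := by abel
      _ = z' + (a • p.1 + b • q.1) := by rw [h2]
  rw [hpt] at hC
  refine le_trans hC (le_of_eq ?_)
  norm_cast
  have h1 : (a • p + b • q).1 = a • p.1 + b • q.1 := rfl
  have h2 : (a • p + b • q).2 = a * p.2 + b * q.2 := rfl
  rw [h1, h2, aff_lin z' hab]
  ring

lemma trans_dual
    (hgeS : ∀ p, ((coupS X p : ℝ) : EReal) ≤ conjF X f p)
    (u1 : StrongDual ℝ X) (u2 : StrongDual ℝ (StrongDual ℝ X)) (r : ℝ)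
    (hi : ∀ w : X × StrongDual ℝ X, ((u1 w.1 + u2 w.2 - r : ℝ) : EReal) ≤ Hh f z' w) :
    u2 u1 ≤ r := by
  set q1 : StrongDual ℝ X := z'.2 + u1 with hq1
  set q2 : StrongDual ℝ (StrongDual ℝ X) := inclusionInDoubleDual ℝ X z'.1 + u2 with hq2
  set K : ℝ := coup X z' + u1 z'.1 + u2 z'.2 with hK
  have hbound : conjF X f (q1, q2) ≤ ((K + r : ℝ) : EReal) := by
    refine iSup_le ?_
    intro v
    have h0 := hi (v - z')
    rw [Hh, add_sub_cancel] at h0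
    rw [er_le_sub_iff] at h0
    have h1 := er_sub_le_coe_of_coe_le h0 (q1 v.1 + q2 v.2)
    refine le_trans h1 (le_of_eq ?_)
    norm_cast
    simp only [hq1, hq2, hK, ContinuousLinearMap.add_apply, NormedSpace.dual_def, aff, coup,
      Prod.fst_sub, Prod.snd_sub, map_sub, ContinuousLinearMap.sub_apply]
    ring
  have hS := hgeS (q1, q2)
  have hcoupS : coupS X (q1, q2) = K + u2 u1 := by
    simp only [coupS, hq1, hq2, hK, ContinuousLinearMap.add_apply, NormedSpace.dual_def, coup,
      map_add]
    ring
  rw [hcoupS] at hS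
  have := le_trans hS hbound
  rw [EReal.coe_le_coe_iff] at this
  linarith

lemma trans_lsc (hlsc : LowerSemicontinuous f) (hne_bot : ∀ v, f v ≠ ⊥) :
    LowerSemicontinuous (Hh f z') := by
  intro w y hy
  induction y using EReal.rec with
  | bot =>
    filter_upwards with w'
    exact bot_lt_iff_ne_bot.2 (trans_nb z' hne_bot w')
  | top => exact absurd hy not_top_lt
  | coe y =>
    obtain ⟨m, hm1, hm2⟩ := EReal.exists_between_coe_real hy
    rw [Hh, er_lt_sub_iff] at hm2
    set η : ℝ := (m - y) / 2 with hη
    have hηpos : 0 < η := by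
      rw [EReal.coe_lt_coe_iff] at hm1
      rw [hη]; linarith
    have hfl := hlsc (z' + w) ((m + aff z' w - η : ℝ) : EReal)
      (lt_of_lt_of_le (by exact_mod_cast (by linarith : m + aff z' w - η < m + aff z' w)) hm2.le)
    have hcont : Tendsto (fun w' : X × StrongDual ℝ X => z' + w') (nhds w) (nhds (z' + w)) :=
      ((continuous_const.add continuous_id).tendsto w)
    have ev1 := hcont.eventually hfl
    have haffc : Continuous fun w' : X × StrongDual ℝ X => aff z' w' := by
      unfold aff
      fun_prop
    have ev2 : ∀ᶠ w' in nhds w, aff z' w' < aff z' w + η :=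
      (haffc.tendsto w).eventually (gt_mem_nhds (lt_add_of_pos_right _ hηpos))
    filter_upwards [ev1, ev2] with w' h1 h2
    have h3 : ((m + aff z' w - η - aff z' w' : ℝ) : EReal) < Hh f z' w' :=
      er_coe_sub_lt h1 _
    refine lt_trans ?_ h3
    rw [EReal.coe_lt_coe_iff]
    rw [hη] at *
    linarith

lemma Hh_zero_le (d : ℝ) (hgap : f z' ≤ ((coup X z' + d : ℝ) : EReal)) :
    Hh f z' 0 ≤ ((d : ℝ) : EReal) := by
  rw [Hh, er_sub_le_iff, aff_zero, add_zero]
  exact le_trans hgap (by norm_cast; linarith)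

end Trans
section MainLemmas
variable {X : Type*} [NormedAddCommGroup X] [NormedSpace ℝ X]
variable {f : X × StrongDual ℝ X → EReal}

lemma coup_abs (w : X × StrongDual ℝ X) : |coup X w| ≤ ‖w.2‖ * ‖w.1‖ := by
  have h := w.2.le_opNorm w.1
  rwa [Real.norm_eq_abs] at h

lemma thmA (hne_bot : ∀ v, f v ≠ ⊥) (hproper : ∃ v, f v ≠ ⊤)
    (hconv : Convex ℝ {p : (X × StrongDual ℝ X) × ℝ | f p.1 ≤ (p.2 : EReal)})
    (hgeS : ∀ p, ((coupS X p : ℝ) : EReal) ≤ conjF X f p)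
    (z' : X × StrongDual ℝ X) (ε : ℝ) (hε : 0 < ε) :
    ∃ w : X × StrongDual ℝ X, Hh f z' w < ((ε - qq w : ℝ) : EReal) := by
  by_contra hno
  push_neg at hno
  have hβ : ∀ w, ((ε/2 : ℝ) : EReal) < Hh f z' w + ((qq w : ℝ) : EReal) := by
    intro w
    have h2 := add_le_add_left (hno w) ((qq w : ℝ) : EReal)
    rw [← EReal.coe_add] at h2
    refine lt_of_lt_of_le ?_ h2
    rw [EReal.coe_lt_coe_iff]
    linarith
  obtain ⟨u1, u2, r, hi, hQ⟩ := core (Hh f z') (trans_prop z' hproper) (trans_nb z' hne_bot)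
    (trans_conv z' hconv) (ε/2) hβ
  have hr := trans_dual z' hgeS u1 u2 r hi
  have ham : |u2 u1| ≤ ‖u2‖ * ‖u1‖ := by
    have h := u2.le_opNorm u1
    rwa [Real.norm_eq_abs] at h
  nlinarith [neg_abs_le (u2 u1), sq_nonneg (‖u1‖ - ‖u2‖), norm_nonneg u1, norm_nonneg u2]

lemma sqrt4mul {d : ℝ} (hd : 0 ≤ d) : Real.sqrt (4*d) = 2*Real.sqrt d := by
  rw [show (4:ℝ)*d = (2*Real.sqrt d)^2 by rw [mul_pow, Real.sq_sqrt hd]; ring,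
    Real.sqrt_sq (by positivity)]

lemma step (hne_bot : ∀ v, f v ≠ ⊥) (hproper : ∃ v, f v ≠ ⊤)
    (hconv : Convex ℝ {p : (X × StrongDual ℝ X) × ℝ | f p.1 ≤ (p.2 : EReal)})
    (hge : ∀ v, ((coup X v : ℝ) : EReal) ≤ f v)
    (hgeS : ∀ p, ((coupS X p : ℝ) : EReal) ≤ conjF X f p)
    (z' : X × StrongDual ℝ X) (d δ : ℝ) (hd : 0 < d) (hδ : 0 < δ) (hδd : δ ≤ d)
    (hgap : f z' ≤ ((coup X z' + d : ℝ) : EReal)) :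
    ∃ w : X × StrongDual ℝ X, f (z' + w) ≤ ((coup X (z' + w) + δ : ℝ) : EReal) ∧
      ‖w.1‖ ≤ 4*Real.sqrt d ∧ ‖w.2‖ ≤ 4*Real.sqrt d := by
  have hβ : ∀ w, ((-(δ/4) : ℝ) : EReal) < Hh f z' w + ((qq w : ℝ) : EReal) := by
    intro w
    have h2 := add_le_add_left (trans_ge z' hge w) ((qq w : ℝ) : EReal)
    rw [← EReal.coe_add] at h2
    refine lt_of_lt_of_le ?_ h2
    rw [EReal.coe_lt_coe_iff]
    have h3 := coup_abs w
    unfold qq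
    nlinarith [neg_abs_le (coup X w), sq_nonneg (‖w.1‖ - ‖w.2‖)]
  obtain ⟨u1, u2, r, hi, hQ⟩ := core (Hh f z') (trans_prop z' hproper) (trans_nb z' hne_bot)
    (trans_conv z' hconv) (-(δ/4)) hβ
  rw [neg_neg] at hQ
  have hr0 : -r ≤ d := by
    have h0 := le_trans (hi 0) (Hh_zero_le z' d hgap)
    rw [EReal.coe_le_coe_iff] at h0
    have e1 : u1 (0 : X × StrongDual ℝ X).1 = 0 := by rw [Prod.fst_zero]; exact map_zero _
    have e2 : u2 (0 : X × StrongDual ℝ X).2 = 0 := by rw [Prod.snd_zero]; exact map_zero _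
    rw [e1, e2] at h0
    linarith
  obtain ⟨w, hw⟩ := thmA hne_bot hproper hconv hgeS z' (δ/4) (by positivity)
  have hreal : u1 w.1 + u2 w.2 - r < δ/4 - qq w := by
    have := lt_of_le_of_lt (hi w) hw
    rwa [EReal.coe_lt_coe_iff] at this
  have habs1 : |u1 w.1| ≤ ‖u1‖ * ‖w.1‖ := by
    have h := u1.le_opNorm w.1
    rwa [Real.norm_eq_abs] at h
  have habs2 : |u2 w.2| ≤ ‖u2‖ * ‖w.2‖ := by
    have h := u2.le_opNorm w.2
    rwa [Real.norm_eq_abs] at h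
  have hq1 : (‖w.1‖ - ‖u1‖)^2 ≤ δ ∧ (‖w.2‖ - ‖u2‖)^2 ≤ δ := by
    unfold qq at hreal
    constructor <;>
      nlinarith [neg_abs_le (u1 w.1), neg_abs_le (u2 w.2), habs1, habs2,
        sq_nonneg (‖w.1‖ - ‖u1‖), sq_nonneg (‖w.2‖ - ‖u2‖)]
  have hu1sq : ‖u1‖^2 ≤ 4*d ∧ ‖u2‖^2 ≤ 4*d := by
    constructor <;> nlinarith [sq_nonneg ‖u1‖, sq_nonneg ‖u2‖]
  have hu1 : ‖u1‖ ≤ 2*Real.sqrt d := by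
    have := Real.sqrt_le_sqrt hu1sq.1
    rwa [Real.sqrt_sq (norm_nonneg _), sqrt4mul hd.le] at this
  have hu2 : ‖u2‖ ≤ 2*Real.sqrt d := by
    have := Real.sqrt_le_sqrt hu1sq.2
    rwa [Real.sqrt_sq (norm_nonneg u2), sqrt4mul hd.le] at this
  have hw1d : ‖w.1‖ - ‖u1‖ ≤ Real.sqrt δ := by
    have h := Real.sqrt_le_sqrt hq1.1
    rw [Real.sqrt_sq_eq_abs] at h
    exact le_trans (le_abs_self _) h
  have hw2d : ‖w.2‖ - ‖u2‖ ≤ Real.sqrt δ := by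
    have h := Real.sqrt_le_sqrt hq1.2
    rw [Real.sqrt_sq_eq_abs] at h
    exact le_trans (le_abs_self _) h
  have hsd : Real.sqrt δ ≤ Real.sqrt d := Real.sqrt_le_sqrt hδd
  refine ⟨w, ?_, by linarith [Real.sqrt_nonneg d], by linarith [Real.sqrt_nonneg d]⟩
  rw [gap_iff]
  refine le_trans hw.le ?_
  rw [EReal.coe_le_coe_iff]
  have h3 : (0:ℝ) ≤ coup X w + qq w := by
    have := neg_abs_le (coup X w)
    have h4 := coup_abs w
    unfold qq
    nlinarith [sq_nonneg (‖w.1‖ - ‖w.2‖)]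
  linarith
end MainLemmas
section BRsec
variable {X : Type*} [NormedAddCommGroup X] [NormedSpace ℝ X]
variable {f : X × StrongDual ℝ X → EReal}

lemma sqrt_div4pow {d : ℝ} (hd : 0 ≤ d) (k : ℕ) :
    Real.sqrt (d/4^k) = Real.sqrt d * (1/2)^k := by
  have h1 : (((1/2:ℝ))^k)^2 = (1/4:ℝ)^k := by
    rw [← pow_mul, mul_comm, pow_mul]; norm_num
  have h2 : d / 4^k = d * (1/4)^k := by
    rw [div_pow, one_pow, mul_one_div]
  rw [show d/4^k = (Real.sqrt d * (1/2)^k)^2 by rw [mul_pow, Real.sq_sqrt hd, h1, h2],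
    Real.sqrt_sq (by positivity)]

lemma BR [CompleteSpace X] (hne_bot : ∀ v, f v ≠ ⊥) (hproper : ∃ v, f v ≠ ⊤)
    (hconv : Convex ℝ {p : (X × StrongDual ℝ X) × ℝ | f p.1 ≤ (p.2 : EReal)})
    (hge : ∀ v, ((coup X v : ℝ) : EReal) ≤ f v)
    (hgeS : ∀ p, ((coupS X p : ℝ) : EReal) ≤ conjF X f p)
    (hlsc : LowerSemicontinuous f)
    (z₀ : X × StrongDual ℝ X) (d : ℝ) (hd : 0 < d)
    (hgap : f z₀ ≤ ((coup X z₀ + d : ℝ) : EReal)) :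
    ∃ zb : X × StrongDual ℝ X, zb ∈ Mset X f ∧ ‖zb.1 - z₀.1‖ ≤ 8*Real.sqrt d ∧
      ‖zb.2 - z₀.2‖ ≤ 8*Real.sqrt d := by
  have hstep : ∀ (k : ℕ) (z' : X × StrongDual ℝ X), f z' ≤ ((coup X z' + d/4^k : ℝ):EReal) →
      ∃ z'' : X × StrongDual ℝ X, f z'' ≤ ((coup X z'' + d/4^(k+1) : ℝ):EReal) ∧
        ‖z''.1 - z'.1‖ ≤ 4*Real.sqrt d*(1/2)^k ∧ ‖z''.2 - z'.2‖ ≤ 4*Real.sqrt d*(1/2)^k := by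
    intro k z' hz'
    have h4 : (0:ℝ) < d/4^k := by positivity
    have h5 : (0:ℝ) < d/4^(k+1) := by positivity
    have h6 : d/4^(k+1) ≤ d/4^k := by
      apply div_le_div_of_nonneg_left hd.le (by positivity)
      exact pow_le_pow_right₀ (by norm_num) (Nat.le_succ k)
    obtain ⟨w, hw1, hw2, hw3⟩ := step hne_bot hproper hconv hge hgeS z' (d/4^k) (d/4^(k+1))
      h4 h5 h6 hz'
    refine ⟨z' + w, hw1, ?_, ?_⟩
    · have e1 : (z' + w).1 - z'.1 = w.1 := by
        rw [Prod.fst_add]; abel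
      rw [e1]
      calc ‖w.1‖ ≤ 4*Real.sqrt (d/4^k) := hw2
        _ = 4*Real.sqrt d*(1/2)^k := by rw [sqrt_div4pow hd.le]; ring
    · have e2 : (z' + w).2 - z'.2 = w.2 := by
        rw [Prod.snd_add]; abel
      rw [e2]
      calc ‖w.2‖ ≤ 4*Real.sqrt (d/4^k) := hw3
        _ = 4*Real.sqrt d*(1/2)^k := by rw [sqrt_div4pow hd.le]; ring
  let seqP : ∀ k : ℕ, {z' : X × StrongDual ℝ X // f z' ≤ ((coup X z' + d/4^k : ℝ):EReal)} :=
    fun k => Nat.rec (motive := fun k => {z' : X × StrongDual ℝ X // f z' ≤ ((coup X z' + d/4^k : ℝ):EReal)})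
      ⟨z₀, by simpa using hgap⟩
      (fun k ih => ⟨(hstep k ih.1 ih.2).choose, (hstep k ih.1 ih.2).choose_spec.1⟩) k
  let seq : ℕ → X × StrongDual ℝ X := fun k => (seqP k).1
  have hseq0 : seq 0 = z₀ := rfl
  have hgapk : ∀ k, f (seq k) ≤ ((coup X (seq k) + d/4^k : ℝ):EReal) := fun k => (seqP k).2
  have hsucc : ∀ k, seq (k+1) = (hstep k (seqP k).1 (seqP k).2).choose := fun k => rfl
  have hstepk : ∀ k, ‖(seq (k+1)).1 - (seq k).1‖ ≤ 4*Real.sqrt d*(1/2)^k ∧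
      ‖(seq (k+1)).2 - (seq k).2‖ ≤ 4*Real.sqrt d*(1/2)^k := by
    intro k
    have h := (hstep k (seqP k).1 (seqP k).2).choose_spec
    rw [hsucc k]
    exact ⟨h.2.1, h.2.2⟩
  have hdistk : ∀ n, dist (seq n) (seq (n+1)) ≤ (4*Real.sqrt d)*(1/2)^n := by
    intro n
    rw [Prod.dist_eq]
    apply max_le
    · rw [dist_comm, dist_eq_norm]
      exact (hstepk n).1
    · rw [dist_comm, dist_eq_norm]
      exact (hstepk n).2
  have hcau : CauchySeq seq := cauchySeq_of_le_geometric (1/2) (4*Real.sqrt d) (by norm_num) hdistk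
  obtain ⟨zb, hzb⟩ := cauchySeq_tendsto_of_complete hcau
  have hdist : dist (seq 0) zb ≤ (4*Real.sqrt d)/(1 - 1/2) :=
    dist_le_of_le_geometric_of_tendsto₀ (1/2) (4*Real.sqrt d) (by norm_num) hdistk hzb
  have hdist8 : dist z₀ zb ≤ 8*Real.sqrt d := by
    rw [← hseq0]
    refine le_trans hdist (le_of_eq ?_)
    field_simp
    ring
  have hcc : Continuous fun v : X × StrongDual ℝ X => coup X v := by
    have hb := (isBoundedBilinearMap_apply (𝕜 := ℝ) (E := X) (F := ℝ)).continuous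
    exact hb.comp (continuous_snd.prodMk continuous_fst)
  have hmem : zb ∈ Mset X f := by
    by_contra hnm
    have hne : ((coup X zb : ℝ):EReal) ≠ f zb := fun h => hnm h.symm
    have hlt : ((coup X zb : ℝ):EReal) < f zb := lt_of_le_of_ne (hge zb) hne
    obtain ⟨y, hy1, hy2⟩ := EReal.exists_between_coe_real hlt
    have ev1 : ∀ᶠ k in Filter.atTop, (y:EReal) < f (seq k) := hzb.eventually (hlsc zb _ hy2)
    have htc : Filter.Tendsto (fun k => coup X (seq k) + d/4^k) Filter.atTop
        (nhds (coup X zb)) := by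
      have h1 : Filter.Tendsto (fun k => coup X (seq k)) Filter.atTop (nhds (coup X zb)) :=
        (hcc.tendsto zb).comp hzb
      have h2 : Filter.Tendsto (fun k : ℕ => d/4^k) Filter.atTop (nhds 0) := by
        have h3 := (tendsto_pow_atTop_nhds_zero_of_lt_one (r := (1/4:ℝ)) (by norm_num)
          (by norm_num)).const_mul d
        rw [mul_zero] at h3
        refine h3.congr fun k => ?_
        rw [div_pow, one_pow, mul_one_div]
      simpa using h1.add h2
    have hylt : coup X zb < y := by exact_mod_cast hy1
    have ev2 : ∀ᶠ k in Filter.atTop, coup X (seq k) + d/4^k < y := htc.eventually_lt_const hylt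
    obtain ⟨k, h1, h2⟩ := (ev1.and ev2).exists
    have h3 : f (seq k) < (y : EReal) :=
      lt_of_le_of_lt (hgapk k) (by exact_mod_cast h2)
    exact absurd h1 (not_lt.2 h3.le)
  refine ⟨zb, hmem, ?_, ?_⟩
  · rw [← dist_eq_norm, dist_comm]
    refine le_trans ?_ hdist8
    rw [Prod.dist_eq]
    exact le_max_left _ _
  · rw [← dist_eq_norm, dist_comm]
    refine le_trans ?_ hdist8
    rw [Prod.dist_eq]
    exact le_max_right _ _
end BRsec
section Final
variable {X : Type*} [NormedAddCommGroup X] [NormedSpace ℝ X]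

lemma apply_split {E : Type*} [NormedAddCommGroup E] [NormedSpace ℝ E]
    (b' w2 : StrongDual ℝ E) (a' w1 : E) :
    b' a' = w2 w1 + w2 (a' - w1) + (b' - w2) a' := by
  rw [map_sub, ContinuousLinearMap.sub_apply]
  ring

lemma quad_bound {a b A B : ℝ} (ha : 0 ≤ a) (hb : 0 ≤ b) (hA : 0 ≤ A) (hB : 0 ≤ B)
    (h : a^2/2 + b^2/2 ≤ A + B*(a+b)) : a ≤ 4*B + Real.sqrt (2*A) + 1 := by
  have h1 : (a - B)^2 ≤ 2*A + 2*B^2 := by nlinarith [sq_nonneg (b - B)]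
  have h2 : a - B ≤ Real.sqrt (2*A + 2*B^2) := by
    have h3 := Real.sqrt_le_sqrt h1
    rw [Real.sqrt_sq_eq_abs] at h3
    exact le_trans (le_abs_self _) h3
  have h3 : Real.sqrt (2*A + 2*B^2) ≤ Real.sqrt (2*A) + 2*B := by
    rw [Real.sqrt_le_left (by positivity)]
    nlinarith [Real.sq_sqrt (by positivity : (0:ℝ) ≤ 2*A), Real.sqrt_nonneg (2*A)]
  linarith

set_option maxHeartbeats 1600000 in
theorem stmt19' [CompleteSpace X]
    (f : X × StrongDual ℝ X → EReal)
    (hne_bot : ∀ z, f z ≠ ⊥) (hproper : ∃ z, f z ≠ ⊤)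
    (hconv : Convex ℝ {p : (X × StrongDual ℝ X) × ℝ | f p.1 ≤ (p.2 : EReal)})
    (hge : ∀ z, ((coup X z : ℝ) : EReal) ≤ f z)
    (hgeS : ∀ p, ((coupS X p : ℝ) : EReal) ≤ conjF X f p)
    (hlsc : LowerSemicontinuous f)
    (z : X × StrongDual ℝ X) (hz : z ∉ Mset X f) :
    ∃ u : ℕ → X × StrongDual ℝ X,
      (∀ n, u n ∈ Mset X f) ∧
      (∃ C : ℝ, ∀ n, nrm2 (u n) ≤ C) ∧
      (∀ n, (u n).1 ≠ z.1) ∧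
      (∀ n, (u n).2 ≠ z.2) ∧
      Filter.Tendsto (fun n =>
          ((u n).2 - z.2) ((u n).1 - z.1) / (‖(u n).1 - z.1‖ * ‖(u n).2 - z.2‖))
        Filter.atTop (nhds (-1)) := by
  classical
  -- f z > c z
  have hfz : ((coup X z : ℝ) : EReal) < f z :=
    lt_of_le_of_ne (hge z) (fun h => hz h.symm)
  have h0pos : (0 : EReal) < Hh f z 0 := by
    rw [show (0:EReal) = ((0:ℝ):EReal) from rfl, Hh, er_lt_sub_iff, add_zero, aff_zero]
    simpa using hfz
  -- lower semicontinuity near 0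
  obtain ⟨ρ, hρ1, hρ2⟩ := EReal.exists_between_coe_real h0pos
  have hρpos : 0 < ρ := by exact_mod_cast hρ1
  have hev := trans_lsc (f := f) z hlsc hne_bot 0 ((ρ:ℝ):EReal) hρ2
  rw [Metric.eventually_nhds_iff] at hev
  obtain ⟨δ₀, hδ₀pos, hball⟩ := hev
  -- affine minorant
  have hβ1 : ∀ w, (((-1:ℝ)) : EReal) < Hh f z w + ((qq w : ℝ) : EReal) := by
    intro w
    have h2 := add_le_add_left (trans_ge z hge w) ((qq w : ℝ) : EReal)
    rw [← EReal.coe_add] at h2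
    refine lt_of_lt_of_le ?_ h2
    rw [EReal.coe_lt_coe_iff]
    have h3 := coup_abs w
    have h4 := neg_abs_le (coup X w)
    have h5 : ‖w.2‖ * ‖w.1‖ = ‖w.1‖ * ‖w.2‖ := mul_comm _ _
    have h6 := sq_nonneg (‖w.1‖ - ‖w.2‖)
    unfold qq
    linarith [h3, h4, h5, h6]
  obtain ⟨a1, a2, r₀, hilb, -⟩ := core (Hh f z) (trans_prop z hproper) (trans_nb z hne_bot)
    (trans_conv z hconv) (-1) hβ1
  set B : ℝ := max ‖a1‖ ‖a2‖ with hBdef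
  have hB0 : 0 ≤ B := le_trans (norm_nonneg a1) (le_max_left _ _)
  set A : ℝ := 1 + |r₀| with hAdef
  have hA0 : 0 ≤ A := by positivity
  set C : ℝ := 4*B + Real.sqrt (2*A) + 1 with hCdef
  have hC0 : 0 < C := by positivity
  -- epsilon scale
  set ε₀ : ℝ := min (min ρ 1) (min (δ₀^2/8) ((δ₀/100)^2)) with hε₀def
  have hε₀pos : 0 < ε₀ := by
    refine lt_min (lt_min hρpos one_pos) (lt_min (by positivity) (by positivity))
  have hε₀ρ : ε₀ ≤ ρ := le_trans (min_le_left _ _) (min_le_left _ _)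
  have hε₀1 : ε₀ ≤ 1 := le_trans (min_le_left _ _) (min_le_right _ _)
  have hε₀δ : ε₀ ≤ δ₀^2/8 := le_trans (min_le_right _ _) (min_le_left _ _)
  have hε₀δ2 : ε₀ ≤ (δ₀/100)^2 := le_trans (min_le_right _ _) (min_le_right _ _)
  set K : ℝ := 200*(C + 1) with hKdef
  have hK0 : 0 < K := by positivity
  -- the main per-n existential
  have main : ∀ n : ℕ, ∃ zb : X × StrongDual ℝ X, zb ∈ Mset X f ∧
      δ₀/4 ≤ ‖zb.1 - z.1‖ ∧ ‖zb.1 - z.1‖ ≤ C + δ₀ ∧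
      δ₀/4 ≤ ‖zb.2 - z.2‖ ∧ ‖zb.2 - z.2‖ ≤ C + δ₀ ∧
      (zb.2 - z.2) (zb.1 - z.1) ≤ -(‖zb.1 - z.1‖ * ‖zb.2 - z.2‖)
        + K * Real.sqrt (ε₀/(n+1)) := by
    intro n
    set e : ℝ := ε₀/(n+1) with hedef
    have hepos : 0 < e := by positivity
    have hee0 : e ≤ ε₀ := by
      rw [hedef]
      apply div_le_self hε₀pos.le
      have := Nat.cast_nonneg (α := ℝ) n
      linarith
    have he1 : e ≤ 1 := le_trans hee0 hε₀1
    obtain ⟨w, hw⟩ := thmA hne_bot hproper hconv hgeS z e hepos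
    -- real inequalities at w
    have hcw : coup X w + qq w < e := by
      have h1 := lt_of_le_of_lt (trans_ge z hge w) hw
      rw [EReal.coe_lt_coe_iff] at h1
      linarith
    have hamgm : ‖w.1‖ * ‖w.2‖ ≤ qq w := by
      unfold qq; linarith [sq_nonneg (‖w.1‖ - ‖w.2‖)]
    have hba : coup X w + ‖w.1‖ * ‖w.2‖ < e := by
      linarith [hamgm, hcw]
    -- upper bounds on ‖w‖
    have hub : ‖w.1‖ ≤ C ∧ ‖w.2‖ ≤ C := by
      have h1 := lt_of_le_of_lt (hilb w) hw
      rw [EReal.coe_lt_coe_iff] at h1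
      have habs1 : |a1 w.1| ≤ B * ‖w.1‖ := by
        refine le_trans ?_ (mul_le_mul_of_nonneg_right (le_max_left ‖a1‖ ‖a2‖) (norm_nonneg _))
        have h := a1.le_opNorm w.1
        rwa [Real.norm_eq_abs] at h
      have habs2 : |a2 w.2| ≤ B * ‖w.2‖ := by
        refine le_trans ?_ (mul_le_mul_of_nonneg_right (le_max_right ‖a1‖ ‖a2‖) (norm_nonneg _))
        have h := a2.le_opNorm w.2
        rwa [Real.norm_eq_abs] at h
      have hq : ‖w.1‖^2/2 + ‖w.2‖^2/2 ≤ A + B*(‖w.1‖ + ‖w.2‖) := by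
        unfold qq at h1
        have hr1 : r₀ ≤ |r₀| := le_abs_self r₀
        have hn1 := neg_abs_le (a1 w.1)
        have hn2 := neg_abs_le (a2 w.2)
        rw [hAdef]
        linarith [habs1, habs2, he1]
      constructor
      · rw [hCdef]
        exact quad_bound (norm_nonneg _) (norm_nonneg _) hA0 hB0 hq
      · have hq' : ‖w.2‖^2/2 + ‖w.1‖^2/2 ≤ A + B*(‖w.2‖ + ‖w.1‖) := by linarith [hq]
        rw [hCdef]
        exact quad_bound (norm_nonneg _) (norm_nonneg _) hA0 hB0 hq'
    -- lower bounds on ‖w‖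
    have hnear : (‖w.1‖ - ‖w.2‖)^2 ≤ 2*e := by
      have h4 := coup_abs w
      have h5 := neg_abs_le (coup X w)
      have h6 : qq w = ‖w.1‖^2/2 + ‖w.2‖^2/2 := rfl
      have h8 : ‖w.2‖*‖w.1‖ = ‖w.1‖*‖w.2‖ := mul_comm _ _
      linarith [hcw]
    have hdiff : |‖w.1‖ - ‖w.2‖| ≤ δ₀/2 := by
      have h1 : (‖w.1‖ - ‖w.2‖)^2 ≤ (δ₀/2)^2 := by
        have h9 : (δ₀/2)^2 = δ₀^2/4 := by ring
        linarith [hnear, hee0, hε₀δ]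
      have h2 := abs_le_of_sq_le_sq' h1 (by positivity)
      rw [abs_le]
      exact h2
    have hmax : δ₀ ≤ ‖w.1‖ ∨ δ₀ ≤ ‖w.2‖ := by
      by_contra hcon
      push_neg at hcon
      have hd : dist w (0 : X × StrongDual ℝ X) < δ₀ := by
        rw [dist_zero_right, Prod.norm_def]
        exact max_lt hcon.1 hcon.2
      have h5 := hball hd
      have h6 : Hh f z w < ((ρ:ℝ):EReal) := by
        refine lt_of_lt_of_le hw ?_
        rw [EReal.coe_le_coe_iff]
        have : 0 ≤ qq w := by unfold qq; positivity
        linarith [hee0, hε₀ρ]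
      exact absurd h6 (not_lt.2 h5.le)
    have hlow : δ₀/2 ≤ ‖w.1‖ ∧ δ₀/2 ≤ ‖w.2‖ := by
      rw [abs_le] at hdiff
      rcases hmax with h | h
      · exact ⟨by linarith, by linarith⟩
      · exact ⟨by linarith, by linarith⟩
    -- gap at z + w, then BR
    have hgap2 : f (z + w) ≤ ((coup X (z + w) + e : ℝ) : EReal) := by
      rw [gap_iff]
      refine le_trans hw.le ?_
      rw [EReal.coe_le_coe_iff]
      have h4 := coup_abs w
      have h5 := neg_abs_le (coup X w)
      have h6 : qq w = ‖w.1‖^2/2 + ‖w.2‖^2/2 := rfl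
      have h8 : ‖w.2‖*‖w.1‖ = ‖w.1‖*‖w.2‖ := mul_comm _ _
      have h9 := sq_nonneg (‖w.1‖ - ‖w.2‖)
      linarith
    obtain ⟨zb, hzbm, hzb1, hzb2⟩ := BR hne_bot hproper hconv hge hgeS hlsc (z + w) e hepos hgap2
    set t : ℝ := 8 * Real.sqrt e with htdef
    have ht0 : 0 ≤ t := by positivity
    have hsqrte1 : Real.sqrt e ≤ 1 := by
      rw [show (1:ℝ) = Real.sqrt 1 from (Real.sqrt_one).symm]
      exact Real.sqrt_le_sqrt he1
    have ht8 : t ≤ 8 := by rw [htdef]; linarith [hsqrte1, Real.sqrt_nonneg e]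
    have htδ : t ≤ δ₀ * (8/100) := by
      have h1 : Real.sqrt e ≤ δ₀/100 := by
        have h2 : Real.sqrt e ≤ Real.sqrt ((δ₀/100)^2) := Real.sqrt_le_sqrt (le_trans hee0 hε₀δ2)
        rwa [Real.sqrt_sq (by positivity)] at h2
      rw [htdef]; linarith
    -- components
    have he1n : ‖zb.1 - (z + w).1‖ ≤ t := by
      refine le_trans hzb1 ?_
      rw [htdef]
    have he2n : ‖zb.2 - (z + w).2‖ ≤ t := by
      refine le_trans hzb2 ?_
      rw [htdef]
    set a' := zb.1 - z.1 with ha'def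
    set b' := zb.2 - z.2 with hb'def
    have hea : a' - w.1 = zb.1 - (z + w).1 := by
      rw [ha'def, Prod.fst_add]; abel
    have heb : b' - w.2 = zb.2 - (z + w).2 := by
      rw [hb'def, Prod.snd_add]; abel
    have hna1 : ‖a' - w.1‖ ≤ t := by rw [hea]; exact he1n
    have hnb1 : ‖b' - w.2‖ ≤ t := by rw [heb]; exact he2n
    have hna : ‖a'‖ ≤ ‖w.1‖ + t := by
      calc ‖a'‖ = ‖w.1 + (a' - w.1)‖ := by congr 1; abel
        _ ≤ ‖w.1‖ + ‖a' - w.1‖ := norm_add_le _ _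
        _ ≤ ‖w.1‖ + t := by linarith
    have hnb : ‖b'‖ ≤ ‖w.2‖ + t := by
      calc ‖b'‖ = ‖w.2 + (b' - w.2)‖ := by congr 1; abel
        _ ≤ ‖w.2‖ + ‖b' - w.2‖ := norm_add_le _ _
        _ ≤ ‖w.2‖ + t := by linarith
    have hna' : ‖w.1‖ - t ≤ ‖a'‖ := by
      have h3 : |‖a'‖ - ‖w.1‖| ≤ t := le_trans (abs_norm_sub_norm_le a' w.1) hna1
      rw [abs_le] at h3
      linarith [h3.1]
    have hnb' : ‖w.2‖ - t ≤ ‖b'‖ := by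
      have h3 : |‖b'‖ - ‖w.2‖| ≤ t := le_trans (abs_norm_sub_norm_le b' w.2) hnb1
      rw [abs_le] at h3
      linarith [h3.1]
    -- alignment
    have hsplit : b' a' = w.2 w.1 + w.2 (a' - w.1) + (b' - w.2) a' := apply_split b' w.2 a' w.1
    have hterm1 : |w.2 (a' - w.1)| ≤ C * t := by
      have h := w.2.le_opNorm (a' - w.1)
      rw [Real.norm_eq_abs] at h
      refine le_trans h ?_
      exact mul_le_mul hub.2 hna1 (norm_nonneg _) hC0.le
    have hterm2 : |(b' - w.2) a'| ≤ t * (C + t) := by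
      have h := (b' - w.2).le_opNorm a'
      rw [Real.norm_eq_abs] at h
      refine le_trans h ?_
      refine mul_le_mul hnb1 ?_ (norm_nonneg _) ht0
      linarith [hna, hub.1]
    have hprod : ‖a'‖ * ‖b'‖ ≤ ‖w.1‖ * ‖w.2‖ + t*(2*C) + t*8 := by
      have hm : ‖a'‖ * ‖b'‖ ≤ (‖w.1‖ + t) * (‖w.2‖ + t) :=
        mul_le_mul hna hnb (norm_nonneg _) (by positivity)
      have hp1 : t * ‖w.1‖ ≤ t * C := mul_le_mul_of_nonneg_left hub.1 ht0
      have hp2 : t * ‖w.2‖ ≤ t * C := mul_le_mul_of_nonneg_left hub.2 ht0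
      have hp3 : t * t ≤ 8 * t := mul_le_mul_of_nonneg_right ht8 ht0
      linarith [hm, hp1, hp2, hp3]
    have hSS : Real.sqrt e * Real.sqrt e ≤ Real.sqrt e :=
      mul_le_of_le_one_right (Real.sqrt_nonneg e) hsqrte1
    have hesqrt : e ≤ Real.sqrt e := by
      have h9 := Real.sq_sqrt hepos.le
      have h10 : Real.sqrt e ^ 2 = Real.sqrt e * Real.sqrt e := sq (Real.sqrt e) ▸ by ring
      linarith [hSS]
    have halign : b' a' ≤ -(‖a'‖ * ‖b'‖) + K * Real.sqrt e := by
      have h1 : b' a' ≤ w.2 w.1 + C*t + t*(C+t) := by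
        rw [hsplit]
        have i1 := le_abs_self (w.2 (a' - w.1))
        have i2 := le_abs_self ((b' - w.2) a')
        linarith [hterm1, hterm2]
      have h2 : w.2 w.1 < e - ‖w.1‖ * ‖w.2‖ := by
        have hcoupdef : coup X w = w.2 w.1 := rfl
        linarith [hba]
      have hb3 : -(‖w.1‖ * ‖w.2‖) ≤ -(‖a'‖ * ‖b'‖) + t*(2*C) + t*8 := by linarith [hprod]
      have hb4 : b' a' ≤ -(‖a'‖ * ‖b'‖) + (e + C*t + t*(C+t) + t*(2*C) + t*8) := by linarith
      have hb5 : e + C*t + t*(C+t) + t*(2*C) + t*8 ≤ K * Real.sqrt e := by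
        rw [hKdef, htdef]
        linarith [hSS, hesqrt, mul_nonneg hC0.le (Real.sqrt_nonneg e), Real.sqrt_nonneg e]
      linarith
    refine ⟨zb, hzbm, ?_, ?_, ?_, ?_, ?_⟩
    · rw [← ha'def]
      have : δ₀/2 - t ≥ δ₀/4 := by linarith [htδ, hδ₀pos]
      linarith [hna', hlow.1]
    · rw [← ha'def]
      linarith [hna, hub.1, htδ, hδ₀pos]
    · rw [← hb'def]
      have : δ₀/2 - t ≥ δ₀/4 := by linarith [htδ, hδ₀pos]
      linarith [hnb', hlow.2]
    · rw [← hb'def]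
      linarith [hnb, hub.2, htδ, hδ₀pos]
    · rw [← ha'def, ← hb'def]
      exact halign
  -- choose the sequence
  choose u hu1 hu2 hu3 hu4 hu5 hu6 using main
  refine ⟨u, hu1, ?_, ?_, ?_, ?_⟩
  · -- boundedness
    set M : ℝ := ‖z.1‖ + ‖z.2‖ + C + δ₀ + 1 with hMdef
    have hM0 : 0 < M := by positivity
    refine ⟨2*M, fun n => ?_⟩
    have h1 : ‖(u n).1‖ ≤ M := by
      have h2 : ‖(u n).1‖ ≤ ‖(u n).1 - z.1‖ + ‖z.1‖ := by
        calc ‖(u n).1‖ = ‖((u n).1 - z.1) + z.1‖ := by congr 1; abel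
          _ ≤ _ := norm_add_le _ _
      linarith [hu3 n, norm_nonneg z.2]
    have h2 : ‖(u n).2‖ ≤ M := by
      have h3 : ‖(u n).2‖ ≤ ‖(u n).2 - z.2‖ + ‖z.2‖ := by
        calc ‖(u n).2‖ = ‖((u n).2 - z.2) + z.2‖ := by congr 1; abel
          _ ≤ _ := norm_add_le _ _
      linarith [hu5 n, norm_nonneg z.1]
    rw [nrm2, show (2*M) = Real.sqrt ((2*M)^2) from (Real.sqrt_sq (by positivity)).symm]
    apply Real.sqrt_le_sqrt
    have hs1 : ‖(u n).1‖ * ‖(u n).1‖ ≤ M * M :=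
      mul_le_mul h1 h1 (norm_nonneg _) (le_trans (norm_nonneg _) h1)
    have hs2 : ‖(u n).2‖ * ‖(u n).2‖ ≤ M * M :=
      mul_le_mul h2 h2 (norm_nonneg _) (le_trans (norm_nonneg _) h2)
    have hs3 : 0 ≤ M * M := mul_nonneg hM0.le hM0.le
    linarith [hs1, hs2, hs3]
  · intro n h
    have h1 := hu2 n
    rw [h, sub_self, norm_zero] at h1
    linarith [hδ₀pos]
  · intro n h
    have h1 := hu4 n
    rw [h, sub_self, norm_zero] at h1
    linarith [hδ₀pos]
  · -- the limit
    have hden : ∀ n, (δ₀/4)^2 ≤ ‖(u n).1 - z.1‖ * ‖(u n).2 - z.2‖ := by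
      intro n
      have hm := mul_le_mul (hu2 n) (hu4 n) (by positivity) (norm_nonneg _)
      linarith [hm]
    have hdenpos : ∀ n, (0:ℝ) < ‖(u n).1 - z.1‖ * ‖(u n).2 - z.2‖ := fun n =>
      lt_of_lt_of_le (by positivity) (hden n)
    have hlb : ∀ n, -1 ≤ ((u n).2 - z.2) ((u n).1 - z.1)
        / (‖(u n).1 - z.1‖ * ‖(u n).2 - z.2‖) := by
      intro n
      rw [le_div_iff₀ (hdenpos n)]
      have h := ((u n).2 - z.2).le_opNorm ((u n).1 - z.1)
      rw [Real.norm_eq_abs] at h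
      have h5 := neg_abs_le (((u n).2 - z.2) ((u n).1 - z.1))
      have h8 : ‖(u n).2 - z.2‖ * ‖(u n).1 - z.1‖ = ‖(u n).1 - z.1‖ * ‖(u n).2 - z.2‖ :=
        mul_comm _ _
      linarith
    have hub2 : ∀ n, ((u n).2 - z.2) ((u n).1 - z.1)
        / (‖(u n).1 - z.1‖ * ‖(u n).2 - z.2‖)
        ≤ -1 + (K/(δ₀/4)^2) * Real.sqrt (ε₀/(n+1)) := by
      intro n
      rw [div_le_iff₀ (hdenpos n)]
      have h6 := hu6 n
      have hKs : 0 ≤ K * Real.sqrt (ε₀/(n+1)) := by positivity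
      have h7 : K * Real.sqrt (ε₀/(n+1)) * ((δ₀/4)^2)⁻¹ * (‖(u n).1 - z.1‖ * ‖(u n).2 - z.2‖)
          ≥ K * Real.sqrt (ε₀/(n+1)) := by
        rw [ge_iff_le]
        have h8 : (1:ℝ) ≤ ((δ₀/4)^2)⁻¹ * (‖(u n).1 - z.1‖ * ‖(u n).2 - z.2‖) := by
          rw [le_inv_mul_iff₀ (by positivity : (0:ℝ) < ((δ₀/4)^2)), mul_one]
          exact hden n
        have h9 := mul_le_mul_of_nonneg_left h8 hKs
        linarith [h9]
      have : (-1 + (K/(δ₀/4)^2) * Real.sqrt (ε₀/(n+1))) * (‖(u n).1 - z.1‖ * ‖(u n).2 - z.2‖)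
          = -(‖(u n).1 - z.1‖ * ‖(u n).2 - z.2‖)
            + K * Real.sqrt (ε₀/(n+1)) * ((δ₀/4)^2)⁻¹ * (‖(u n).1 - z.1‖ * ‖(u n).2 - z.2‖) := by
        field_simp
      rw [this]
      linarith [h6, h7]
    have htend : Filter.Tendsto (fun n : ℕ => -1 + (K/(δ₀/4)^2) * Real.sqrt (ε₀/(n+1)))
        Filter.atTop (nhds (-1)) := by
      have h1 : Filter.Tendsto (fun n : ℕ => ε₀/(n+1)) Filter.atTop (nhds 0) := by
        have h2 := tendsto_one_div_add_atTop_nhds_zero_nat (𝕜 := ℝ)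
        have h3 := h2.const_mul ε₀
        rw [mul_zero] at h3
        refine h3.congr fun n => ?_
        rw [mul_one_div]
      have h2 : Filter.Tendsto (fun n : ℕ => Real.sqrt (ε₀/(n+1))) Filter.atTop (nhds 0) := by
        have := h1.sqrt
        rwa [Real.sqrt_zero] at this
      have h3 := h2.const_mul (K/(δ₀/4)^2)
      rw [mul_zero] at h3
      have h4 := h3.const_add (-1)
      rwa [add_zero] at h4
    exact tendsto_of_tendsto_of_tendsto_of_le_of_le tendsto_const_nhds htend hlb hub2
end Final


/-- for `f ∈ G_s(Z)` and `(x, x*) ∉ M_f` there is a bounded sequence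
`((x_n, x_n*)) ⊆ M_f` with `x_n ≠ x`, `x_n* ≠ x*` for all `n` and
`⟨x_n - x, x_n* - x*⟩ / (‖x_n - x‖ ‖x_n* - x*‖) → -1`; so strongly representable
operators are of type ANA. -/
theorem stmt19 {X : Type*} [NormedAddCommGroup X] [NormedSpace ℝ X] [CompleteSpace X]
    (f : X × StrongDual ℝ X → EReal)
    (hne_bot : ∀ z, f z ≠ ⊥) (hproper : ∃ z, f z ≠ ⊤)
    (hconv : Convex ℝ {p : (X × StrongDual ℝ X) × ℝ | f p.1 ≤ (p.2 : EReal)})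
    (hge : ∀ z, ((coup X z : ℝ) : EReal) ≤ f z)
    (hgeS : ∀ p, ((coupS X p : ℝ) : EReal) ≤ conjF X f p)
    (hlsc : LowerSemicontinuous f)
    (z : X × StrongDual ℝ X) (hz : z ∉ Mset X f) :
    ∃ u : ℕ → X × StrongDual ℝ X,
      (∀ n, u n ∈ Mset X f) ∧
      (∃ C : ℝ, ∀ n, nrm2 (u n) ≤ C) ∧
      (∀ n, (u n).1 ≠ z.1) ∧
      (∀ n, (u n).2 ≠ z.2) ∧
      Tendsto (fun n =>
          ((u n).2 - z.2) ((u n).1 - z.1) / (‖(u n).1 - z.1‖ * ‖(u n).2 - z.2‖))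
        atTop (nhds (-1)) := by
  exact stmt19' f hne_bot hproper hconv hge hgeS hlsc z hz
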